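/- Under the assumptions of the idealized COLA/Frank-Wolfe algorithm (β-smooth L bounded by M on a convex compact set K of diameter D, approximate linear optimization oracle with additive error ε, constant step size η = √M/(D√(βT))), the average Frank-Wolfe gap satisfies (1/T)·Σ_{t=1}^T g_t ≤ 2√(Mβ)·D/√T + ε. -/

import Mathlib

open RealInnerProductSpace

lemma grad_inner {d : ℕ} (L : EuclideanSpace ℝ (Fin d) → ℝ) (p v : EuclideanSpace ℝ (Fin d)) :
    ⟪gradient L p, v⟫ = fderiv ℝ L p v := by
  simp [gradient, InnerProductSpace.toDual_symm_apply]

lemma tel_sum (f : ℕ → ℝ) (n : ℕ) :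
    ∑ t ∈ Finset.Icc 1 n, (f t - f (t + 1)) = f 1 - f (n + 1) := by
  induction n with
  | zero => simp
  | succ n ih => rw [Finset.sum_Icc_succ_top (by omega), ih]; ring

lemma descent {d : ℕ} (K : Set (EuclideanSpace ℝ (Fin d))) (hK : Convex ℝ K) (β : ℝ)
    (L : EuclideanSpace ℝ (Fin d) → ℝ) (hL : Differentiable ℝ L)
    (hsmooth : ∀ x ∈ K, ∀ y ∈ K, ‖gradient L x - gradient L y‖ ≤ β * ‖x - y‖)
    (x : EuclideanSpace ℝ (Fin d)) (hx : x ∈ K) (y : EuclideanSpace ℝ (Fin d)) (hy : y ∈ K) :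
    L y ≤ L x + ⟪gradient L x, y - x⟫ + β / 2 * ‖y - x‖ ^ 2 := by
  set v := y - x with hv
  set φ : ℝ → ℝ := fun s => L (x + s • v) - s * ⟪gradient L x, v⟫ - β / 2 * ‖v‖ ^ 2 * s ^ 2
    with hφ
  have hc : ∀ s : ℝ, HasDerivAt (fun s : ℝ => x + s • v) v s := fun s => by
    simpa using ((hasDerivAt_id s).smul_const v).const_add x
  have hder : ∀ s : ℝ, HasDerivAt φ
      (fderiv ℝ L (x + s • v) v - ⟪gradient L x, v⟫ - β / 2 * ‖v‖ ^ 2 * (2 * s)) s := by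
    intro s
    have h1 : HasDerivAt (fun s : ℝ => L (x + s • v)) (fderiv ℝ L (x + s • v) v) s :=
      (hL.differentiableAt.hasFDerivAt).comp_hasDerivAt s (hc s)
    have h2 : HasDerivAt (fun s : ℝ => s * ⟪gradient L x, v⟫) ⟪gradient L x, v⟫ s := by
      simpa using (hasDerivAt_id s).mul_const ⟪gradient L x, v⟫
    have h3 : HasDerivAt (fun s : ℝ => β / 2 * ‖v‖ ^ 2 * s ^ 2)
        (β / 2 * ‖v‖ ^ 2 * (2 * s)) s := by
      simpa [mul_comm] using ((hasDerivAt_pow 2 s).const_mul (β / 2 * ‖v‖ ^ 2))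
    exact (h1.sub h2).sub h3
  have hmem : ∀ s ∈ Set.Icc (0:ℝ) 1, x + s • v ∈ K := by
    intro s hs
    have : x + s • v = (1 - s) • x + s • y := by
      rw [hv]; module
    rw [this]
    exact hK hx hy (by linarith [hs.2]) hs.1 (by ring)
  have hanti : AntitoneOn φ (Set.Icc (0:ℝ) 1) := by
    apply antitoneOn_of_deriv_nonpos (convex_Icc 0 1)
    · exact fun s _ => ((hder s).differentiableAt).continuousAt.continuousWithinAt
    · exact fun s _ => (hder s).differentiableAt.differentiableWithinAt
    · intro s hs
      rw [interior_Icc] at hs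
      rw [(hder s).deriv]
      have h1 : fderiv ℝ L (x + s • v) v - ⟪gradient L x, v⟫
          = ⟪gradient L (x + s • v) - gradient L x, v⟫ := by
        rw [inner_sub_left, grad_inner, grad_inner]
      have h2 : ⟪gradient L (x + s • v) - gradient L x, v⟫ ≤ β * s * ‖v‖ ^ 2 := by
        calc ⟪gradient L (x + s • v) - gradient L x, v⟫
            ≤ ‖gradient L (x + s • v) - gradient L x‖ * ‖v‖ := real_inner_le_norm _ _
          _ ≤ (β * ‖(x + s • v) - x‖) * ‖v‖ := by
              apply mul_le_mul_of_nonneg_right _ (norm_nonneg _)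
              exact hsmooth _ (hmem s ⟨hs.1.le, hs.2.le⟩) _ hx
          _ = β * s * ‖v‖ ^ 2 := by
              rw [add_sub_cancel_left, norm_smul]
              simp [abs_of_pos hs.1]; ring
      rw [h1]
      nlinarith [h2]
  have := hanti (Set.mem_Icc.2 ⟨le_refl 0, zero_le_one⟩) (Set.mem_Icc.2 ⟨zero_le_one, le_refl 1⟩)
    zero_le_one
  simp only [hφ, one_smul, zero_smul, add_zero, one_mul, one_pow, zero_mul,
    mul_zero, sub_zero, zero_pow, mul_one] at this
  have hxy : x + v = y := by rw [hv]; abel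
  rw [hxy] at this
  linarith

/-- Convergence of idealized COLA (stochastic Frank-Wolfe with ε-approximate
linear optimization oracle): the average Frank-Wolfe gap is at most
`2√(Mβ)·D/√T + ε`. -/
theorem cola_convergence {d : ℕ} (K : Set (EuclideanSpace ℝ (Fin d)))
    (hK : Convex ℝ K) (hKc : IsCompact K) (hKne : K.Nonempty)
    (D β ε M : ℝ) (T : ℕ) (hT : 1 ≤ T)
    (hβ : 0 < β) (hε : 0 ≤ ε) (hM : 0 < M) (hDpos : 0 < D)
    (hD : ∀ x ∈ K, ∀ y ∈ K, ‖x - y‖ ≤ D)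
    (L : EuclideanSpace ℝ (Fin d) → ℝ) (hL : Differentiable ℝ L)
    (hsmooth : ∀ x ∈ K, ∀ y ∈ K, ‖gradient L x - gradient L y‖ ≤ β * ‖x - y‖)
    (hbound : ∀ x ∈ K, ∀ y ∈ K, |L x - L y| ≤ M)
    (η : ℝ) (hη : η = Real.sqrt M / (D * Real.sqrt (β * T))) (hη1 : η ≤ 1)
    (W V : ℕ → EuclideanSpace ℝ (Fin d))
    (hW1 : W 1 ∈ K) (hV : ∀ t, V t ∈ K)
    (horacle : ∀ t ∈ Finset.Icc 1 T,
      ⟪gradient L (W t), V t⟫ ≤ sInf ((fun U => ⟪gradient L (W t), U⟫) '' K) + ε)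
    (hupdate : ∀ t, W (t + 1) = W t + η • (V t - W t))
    (g : ℕ → ℝ)
    (hg : ∀ t, g t = sSup ((fun U => ⟪gradient L (W t), W t - U⟫) '' K)) :
    (1 / (T : ℝ)) * ∑ t ∈ Finset.Icc 1 T, g t ≤
      2 * Real.sqrt (M * β) * D / Real.sqrt T + ε := by
  have hTpos : (0:ℝ) < T := by exact_mod_cast hT
  have hsβT : 0 < Real.sqrt (β * T) := Real.sqrt_pos.2 (by positivity)
  have hηpos : 0 < η := by rw [hη]; positivity
  -- all iterates stay in K
  have hWK : ∀ t, 1 ≤ t → W t ∈ K := by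
    intro t ht
    induction t with
    | zero => omega
    | succ n ih =>
      rcases Nat.eq_or_lt_of_le ht with h | h
      · simpa [← h] using hW1
      · have hn : 1 ≤ n := by omega
        have hWn := ih hn
        have : W (n + 1) = (1 - η) • W n + η • V n := by
          rw [hupdate n]; module
        rw [this]
        exact hK hWn (hV n) (by linarith) hηpos.le (by ring)
  -- per-step inequality
  have hstep : ∀ t ∈ Finset.Icc 1 T,
      η * g t ≤ L (W t) - L (W (t + 1)) + η * ε + β / 2 * η ^ 2 * D ^ 2 := by
    intro t ht
    rw [Finset.mem_Icc] at ht
    have hWt : W t ∈ K := hWK t ht.1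
    have hWt1 : W (t + 1) ∈ K := hWK (t + 1) (by omega)
    have hcont : Continuous fun U : EuclideanSpace ℝ (Fin d) => ⟪gradient L (W t), U⟫ :=
      (innerSL ℝ (gradient L (W t))).continuous
    have hbdd : BddBelow ((fun U => ⟪gradient L (W t), U⟫) '' K) :=
      (hKc.image hcont).bddBelow
    have hgle : g t ≤ ⟪gradient L (W t), W t - V t⟫ + ε := by
      rw [hg]
      apply csSup_le (hKne.image _)
      rintro a ⟨U, hU, rfl⟩
      have h1 : sInf ((fun U => ⟪gradient L (W t), U⟫) '' K) ≤ ⟪gradient L (W t), U⟫ :=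
        csInf_le hbdd ⟨U, hU, rfl⟩
      have h2 := horacle t (Finset.mem_Icc.2 ht)
      simp only [inner_sub_right]
      linarith
    have hdes := descent K hK β L hL hsmooth (W t) hWt (W (t + 1)) hWt1
    have hdiff : W (t + 1) - W t = η • (V t - W t) := by rw [hupdate t]; abel
    rw [hdiff, real_inner_smul_right, norm_smul] at hdes
    have hVW : ‖V t - W t‖ ≤ D := hD _ (hV t) _ hWt
    have hn2 : (‖η‖ * ‖V t - W t‖) ^ 2 ≤ η ^ 2 * D ^ 2 := by
      rw [Real.norm_eq_abs, abs_of_pos hηpos, mul_pow]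
      exact mul_le_mul_of_nonneg_left (by nlinarith [norm_nonneg (V t - W t)]) (by positivity)
    have hinner : ⟪gradient L (W t), V t - W t⟫ ≤ ε - g t := by
      rw [inner_sub_right] at hgle ⊢
      linarith
    nlinarith [hdes, mul_le_mul_of_nonneg_right hinner hηpos.le]
  -- sum the per-step inequality
  have hsum : η * ∑ t ∈ Finset.Icc 1 T, g t ≤
      M + T * (η * ε) + T * (β / 2 * η ^ 2 * D ^ 2) := by
    have h1 : ∑ t ∈ Finset.Icc 1 T, (η * g t) ≤
        ∑ t ∈ Finset.Icc 1 T, (L (W t) - L (W (t + 1)) + η * ε + β / 2 * η ^ 2 * D ^ 2) :=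
      Finset.sum_le_sum hstep
    have hLM : L (W 1) - L (W (T + 1)) ≤ M := by
      have := hbound (W 1) hW1 (W (T + 1)) (hWK (T + 1) (by omega))
      exact (abs_le.1 this).2
    calc η * ∑ t ∈ Finset.Icc 1 T, g t = ∑ t ∈ Finset.Icc 1 T, (η * g t) := Finset.mul_sum ..
      _ ≤ _ := h1
      _ = (L (W 1) - L (W (T + 1))) + T * (η * ε) + T * (β / 2 * η ^ 2 * D ^ 2) := by
          rw [Finset.sum_add_distrib, Finset.sum_add_distrib, tel_sum (fun t => L (W t)) T,
            Finset.sum_const, Finset.sum_const, Nat.card_Icc]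
          simp [nsmul_eq_mul]
      _ ≤ _ := by linarith
  -- divide by η T
  have hdiv : (1 / (T:ℝ)) * ∑ t ∈ Finset.Icc 1 T, g t ≤
      M / (η * T) + ε + β / 2 * η * D ^ 2 := by
    have h2 : η * ∑ t ∈ Finset.Icc 1 T, g t ≤
        η * (T * (M / (η * T) + ε + β / 2 * η * D ^ 2)) := by
      calc η * ∑ t ∈ Finset.Icc 1 T, g t
          ≤ M + T * (η * ε) + T * (β / 2 * η ^ 2 * D ^ 2) := hsum
        _ = η * (T * (M / (η * T) + ε + β / 2 * η * D ^ 2)) := by field_simp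
    have h3 := le_of_mul_le_mul_left h2 hηpos
    rw [one_div, inv_mul_le_iff₀ hTpos]
    exact h3
  -- final arithmetic
  have harith : M / (η * T) + β / 2 * η * D ^ 2 ≤ 2 * Real.sqrt (M * β) * D / Real.sqrt T := by
    have hβT : Real.sqrt (β * T) = Real.sqrt β * Real.sqrt T := Real.sqrt_mul hβ.le _
    have hMβ : Real.sqrt (M * β) = Real.sqrt M * Real.sqrt β := Real.sqrt_mul hM.le _
    rw [hη, hβT, hMβ]
    have hM2 : Real.sqrt M ^ 2 = M := Real.sq_sqrt hM.le
    have hb2 : Real.sqrt β ^ 2 = β := Real.sq_sqrt hβ.le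
    have hT2 : Real.sqrt (T:ℝ) ^ 2 = (T:ℝ) := Real.sq_sqrt hTpos.le
    have hsM : (0:ℝ) < Real.sqrt M := Real.sqrt_pos.2 hM
    have hsb : (0:ℝ) < Real.sqrt β := Real.sqrt_pos.2 hβ
    have hsT : (0:ℝ) < Real.sqrt (T:ℝ) := Real.sqrt_pos.2 hTpos
    set a := Real.sqrt M with ha
    set b := Real.sqrt β with hb
    set c := Real.sqrt (T:ℝ) with hc
    rw [← hM2, ← hb2, ← hT2]
    have e1 : a ^ 2 / (a / (D * (b * c)) * c ^ 2) = D * a * b / c := by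
      field_simp
    have e2 : b ^ 2 / 2 * (a / (D * (b * c))) * D ^ 2 = D * a * b / c / 2 := by
      field_simp
    rw [e1, e2]
    have hq : (0:ℝ) < D * a * b / c := by positivity
    have e3 : 2 * (a * b) * D / c = 2 * (D * a * b / c) := by ring
    rw [e3]
    linarith
  linarith
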